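/- Let Q be the subalgebra of Mat_X(ℂ) generated by L, F, R, and let T be the subalgebra generated by A and {E*_i}_{i=0}^D. Then Q·M* = T = M*·Q, where M* is the span of {E*_i}_{i=0}^D. -/
import Mathlib


open Matrix BigOperators

noncomputable section

variable {X : Type*} [Fintype X] [DecidableEq X]

/-- The adjacency matrix of a graph, over ℂ. -/
def adjMat (G : SimpleGraph X) [DecidableRel G.Adj] : Matrix X X ℂ :=
  Matrix.of fun y z => if G.Adj y z then 1 else 0

/-- The dual idempotent `E*_i`: diagonal 0-1 matrix projecting onto
vertices at distance `i` from `x` (zero for `i` outside the distance range). -/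
def Estar (G : SimpleGraph X) (x : X) (i : ℤ) : Matrix X X ℂ :=
  Matrix.diagonal fun y => if (G.dist x y : ℤ) = i then 1 else 0

/-- The lowering matrix `L = Σ_{i=1}^D E*_{i-1} A E*_i`. -/
def lowerM (G : SimpleGraph X) [DecidableRel G.Adj] (x : X) (D : ℕ) : Matrix X X ℂ :=
  ∑ i ∈ Finset.Icc 1 D, Estar G x ((i : ℤ) - 1) * adjMat G * Estar G x i

/-- The flat matrix `F = Σ_{i=0}^D E*_i A E*_i`. -/
def flatM (G : SimpleGraph X) [DecidableRel G.Adj] (x : X) (D : ℕ) : Matrix X X ℂ :=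
  ∑ i ∈ Finset.range (D + 1), Estar G x i * adjMat G * Estar G x i

/-- The raising matrix `R = Σ_{i=0}^{D-1} E*_{i+1} A E*_i`. -/
def raiseM (G : SimpleGraph X) [DecidableRel G.Adj] (x : X) (D : ℕ) : Matrix X X ℂ :=
  ∑ i ∈ Finset.range D, Estar G x ((i : ℤ) + 1) * adjMat G * Estar G x i

/-- The subconstituent (Terwilliger) algebra `T`, generated by `A` and the `E*_i`. -/
def Talg (G : SimpleGraph X) [DecidableRel G.Adj] (x : X) (D : ℕ) :
    Subalgebra ℂ (Matrix X X ℂ) :=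
  Algebra.adjoin ℂ (insert (adjMat G) (Estar G x '' Set.Icc (0 : ℤ) (D : ℤ)))

/-- The quantum adjacency algebra `Q`, generated by `L, F, R`. -/
def Qalg (G : SimpleGraph X) [DecidableRel G.Adj] (x : X) (D : ℕ) :
    Subalgebra ℂ (Matrix X X ℂ) :=
  Algebra.adjoin ℂ {lowerM G x D, flatM G x D, raiseM G x D}

/-- The dual adjacency algebra `M*`, the span of the `E*_i`. -/
def Mstar (G : SimpleGraph X) (x : X) (D : ℕ) : Submodule ℂ (Matrix X X ℂ) :=
  Submodule.span ℂ (Estar G x '' Set.Icc (0 : ℤ) (D : ℤ))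

/-- The graded component `T_n = Σ_i E*_{i+n} T E*_i`. -/
def Tgraded (G : SimpleGraph X) [DecidableRel G.Adj] (x : X) (D : ℕ) (n : ℤ) :
    Submodule ℂ (Matrix X X ℂ) :=
  Submodule.span ℂ
    {M | ∃ i : ℤ, ∃ S ∈ Talg G x D, M = Estar G x (i + n) * S * Estar G x i}

/-- The graded component `Q_n = Q ∩ T_n`. -/
def Qgraded (G : SimpleGraph X) [DecidableRel G.Adj] (x : X) (D : ℕ) (n : ℤ) :
    Submodule ℂ (Matrix X X ℂ) :=
  (Subalgebra.toSubmodule (Qalg G x D)) ⊓ Tgraded G x D n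

/-- `W` is an irreducible module for the algebra `A₀ ⊆ Mat_X(ℂ)` (acting on `V = ℂ^X`
by matrix-vector multiplication). -/
def IsIrredMod (A₀ : Subalgebra ℂ (Matrix X X ℂ)) (W : Submodule ℂ (X → ℂ)) : Prop :=
  (∀ S ∈ A₀, ∀ w ∈ W, S.mulVec w ∈ W) ∧ W ≠ ⊥ ∧
    ∀ W' : Submodule ℂ (X → ℂ), W' ≤ W →
      (∀ S ∈ A₀, ∀ w ∈ W', S.mulVec w ∈ W') → W' = ⊥ ∨ W' = W

/-- The subspace `E*_i W`. -/
def Emap (G : SimpleGraph X) (x : X) (i : ℤ) (W : Submodule ℂ (X → ℂ)) :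
    Submodule ℂ (X → ℂ) :=
  W.map (Estar G x i).mulVecLin

/-- The subspace `P · W` spanned by all `S w`, `S ∈ P`, `w ∈ W`. -/
def actSp (P : Submodule ℂ (Matrix X X ℂ)) (W : Submodule ℂ (X → ℂ)) :
    Submodule ℂ (X → ℂ) :=
  Submodule.span ℂ {v | ∃ S ∈ P, ∃ w ∈ W, v = S.mulVec w}

/-- The statement: `W` has endpoint `r` and diameter `d`, i.e. `E*_i W ≠ 0`
iff `r ≤ i ≤ r + d`. -/
def HasEndpointDiam (G : SimpleGraph X) (x : X) (W : Submodule ℂ (X → ℂ))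
    (r d : ℕ) : Prop :=
  ∀ i : ℤ, Emap G x i W ≠ ⊥ ↔ ((r : ℤ) ≤ i ∧ i ≤ (r : ℤ) + (d : ℤ))

/-- `σ` restricts to an isomorphism of `Q`-modules from `U` to `W`. -/
def IsQIso (G : SimpleGraph X) [DecidableRel G.Adj] (x : X) (D : ℕ)
    (U W : Submodule ℂ (X → ℂ)) (σ : (X → ℂ) →ₗ[ℂ] (X → ℂ)) : Prop :=
  U.map σ = W ∧ (∀ u ∈ U, σ u = 0 → u = 0) ∧
    ∀ S ∈ Qalg G x D, ∀ u ∈ U, σ (S.mulVec u) = S.mulVec (σ u)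

/-- `σ` restricts to an isomorphism of `T`-modules from `U` to `W`. -/
def IsTIso (G : SimpleGraph X) [DecidableRel G.Adj] (x : X) (D : ℕ)
    (U W : Submodule ℂ (X → ℂ)) (σ : (X → ℂ) →ₗ[ℂ] (X → ℂ)) : Prop :=
  U.map σ = W ∧ (∀ u ∈ U, σ u = 0 → u = 0) ∧
    ∀ S ∈ Talg G x D, ∀ u ∈ U, σ (S.mulVec u) = S.mulVec (σ u)

/-- `σ` restricts to a quasi-isomorphism of `T`-modules from `U` to `W`,
with endpoint shift `n`. -/
def IsQuasiIso (G : SimpleGraph X) [DecidableRel G.Adj] (x : X) (D : ℕ)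
    (U W : Submodule ℂ (X → ℂ)) (σ : (X → ℂ) →ₗ[ℂ] (X → ℂ)) (n : ℤ) : Prop :=
  U.map σ = W ∧ (∀ u ∈ U, σ u = 0 → u = 0) ∧
    (∀ u ∈ U, σ ((lowerM G x D).mulVec u) = (lowerM G x D).mulVec (σ u)) ∧
    (∀ u ∈ U, σ ((flatM G x D).mulVec u) = (flatM G x D).mulVec (σ u)) ∧
    (∀ u ∈ U, σ ((raiseM G x D).mulVec u) = (raiseM G x D).mulVec (σ u)) ∧
    ∀ i : ℤ, ∀ u ∈ U, σ ((Estar G x i).mulVec u) = (Estar G x (i + n)).mulVec (σ u)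

end
section Aux

open Matrix BigOperators

variable {X : Type*} [Fintype X] [DecidableEq X]
variable (G : SimpleGraph X) (x : X) (D : ℕ)

lemma Estar_mul_Estar (i j : ℤ) :
    Estar G x i * Estar G x j = if i = j then Estar G x i else 0 := by
  unfold Estar
  rw [Matrix.diagonal_mul_diagonal]
  split_ifs with h
  · exact congrArg Matrix.diagonal (funext fun y => by split <;> simp_all)
  · rw [← Matrix.diagonal_zero]
    refine congrArg Matrix.diagonal (funext fun y => ?_)
    by_cases h1 : (G.dist x y : ℤ) = i
    · rw [if_pos h1, if_neg fun h2 => h (h1.symm.trans h2), mul_zero]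
    · rw [if_neg h1, zero_mul]

lemma Estar_eq_zero (hD : ∀ y, G.dist x y ≤ D) {i : ℤ} (h : ¬ (0 ≤ i ∧ i ≤ (D : ℤ))) :
    Estar G x i = 0 := by
  unfold Estar
  rw [← Matrix.diagonal_zero]
  refine congrArg Matrix.diagonal (funext fun y => ?_)
  rw [if_neg]
  rintro rfl
  exact h ⟨Int.natCast_nonneg _, by exact_mod_cast hD y⟩

lemma Estar_mem_Mstar (hD : ∀ y, G.dist x y ≤ D) (i : ℤ) :
    Estar G x i ∈ Mstar G x D := by
  by_cases h : 0 ≤ i ∧ i ≤ (D : ℤ)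
  · exact Submodule.subset_span ⟨i, ⟨h.1, h.2⟩, rfl⟩
  · rw [Estar_eq_zero G x D hD h]; exact zero_mem _

lemma sum_Estar (hD : ∀ y, G.dist x y ≤ D) :
    ∑ i ∈ Finset.range (D + 1), Estar G x (i : ℤ) = 1 := by
  ext y z
  rw [Matrix.sum_apply]
  by_cases hyz : y = z
  · subst hyz
    simp only [Estar, Matrix.diagonal_apply_eq, Matrix.one_apply_eq]
    rw [Finset.sum_eq_single (G.dist x y)]
    · simp
    · intro b _ hb
      rw [if_neg]
      intro h
      exact hb (by exact_mod_cast h.symm)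
    · intro h
      exact absurd (Finset.mem_range.mpr (Nat.lt_succ_of_le (hD y))) h
  · simp [Estar, Matrix.diagonal_apply_ne _ hyz, Matrix.one_apply_ne hyz]

lemma one_mem_Mstar (hD : ∀ y, G.dist x y ≤ D) : (1 : Matrix X X ℂ) ∈ Mstar G x D := by
  rw [← sum_Estar G x D hD]
  exact Submodule.sum_mem _ fun i _ => Estar_mem_Mstar G x D hD _

lemma Mstar_mul_mem (hD : ∀ y, G.dist x y ≤ D) {m m' : Matrix X X ℂ}
    (hm : m ∈ Mstar G x D) (hm' : m' ∈ Mstar G x D) : m * m' ∈ Mstar G x D := by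
  induction hm using Submodule.span_induction with
  | mem a ha =>
    obtain ⟨i, _, rfl⟩ := ha
    induction hm' using Submodule.span_induction with
    | mem b hb =>
      obtain ⟨j, _, rfl⟩ := hb
      rw [Estar_mul_Estar]
      split_ifs
      · exact Estar_mem_Mstar G x D hD _
      · exact zero_mem _
    | zero => rw [mul_zero]; exact zero_mem _
    | add u v _ _ hu hv => rw [mul_add]; exact add_mem hu hv
    | smul c u _ hu => rw [mul_smul_comm]; exact Submodule.smul_mem _ _ hu
  | zero => rw [zero_mul]; exact zero_mem _
  | add u v _ _ hu hv => rw [add_mul]; exact add_mem hu hv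
  | smul c u _ hu => rw [smul_mul_assoc]; exact Submodule.smul_mem _ _ hu

lemma Estar_mul_sandwich (j a b : ℤ) (M : Matrix X X ℂ) :
    Estar G x j * (Estar G x a * M * Estar G x b)
      = if j = a then Estar G x a * M * Estar G x b else 0 := by
  rw [← mul_assoc, ← mul_assoc, Estar_mul_Estar]
  split_ifs with h
  · subst h; rfl
  · simp

lemma sandwich_mul_Estar (j a b : ℤ) (M : Matrix X X ℂ) :
    (Estar G x a * M * Estar G x b) * Estar G x j
      = if b = j then Estar G x a * M * Estar G x b else 0 := by
  rw [mul_assoc, Estar_mul_Estar]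
  split_ifs with h
  · subst h; rfl
  · simp

variable [DecidableRel G.Adj]

lemma Estar_mul_lowerM (j : ℤ) :
    Estar G x j * lowerM G x D = lowerM G x D * Estar G x (j + 1) := by
  unfold lowerM
  rw [Finset.mul_sum, Finset.sum_mul]
  refine Finset.sum_congr rfl fun i _ => ?_
  rw [Estar_mul_sandwich, sandwich_mul_Estar]
  by_cases h : (i : ℤ) = j + 1
  · rw [if_pos (by omega), if_pos (by omega)]
  · rw [if_neg (by omega), if_neg (by omega)]

lemma Estar_mul_flatM (j : ℤ) :
    Estar G x j * flatM G x D = flatM G x D * Estar G x j := by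
  unfold flatM
  rw [Finset.mul_sum, Finset.sum_mul]
  refine Finset.sum_congr rfl fun i _ => ?_
  rw [Estar_mul_sandwich, sandwich_mul_Estar]
  by_cases h : (i : ℤ) = j
  · rw [if_pos (by omega), if_pos (by omega)]
  · rw [if_neg (by omega), if_neg (by omega)]

lemma Estar_mul_raiseM (j : ℤ) :
    Estar G x j * raiseM G x D = raiseM G x D * Estar G x (j - 1) := by
  unfold raiseM
  rw [Finset.mul_sum, Finset.sum_mul]
  refine Finset.sum_congr rfl fun i _ => ?_
  rw [Estar_mul_sandwich, sandwich_mul_Estar]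
  by_cases h : (i : ℤ) = j - 1
  · rw [if_pos (by omega), if_pos (by omega)]
  · rw [if_neg (by omega), if_neg (by omega)]

lemma sandwich_apply (a b : ℤ) (M : Matrix X X ℂ) (y z : X) :
    (Estar G x a * M * Estar G x b) y z =
      (if (G.dist x y : ℤ) = a then 1 else 0) * M y z
        * (if (G.dist x z : ℤ) = b then 1 else 0) := by
  rw [Estar, Estar, Matrix.mul_diagonal, Matrix.diagonal_mul]

lemma adj_decomp (hG : G.Connected) (hD : ∀ y, G.dist x y ≤ D) :
    adjMat G = lowerM G x D + flatM G x D + raiseM G x D := by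
  ext y z
  by_cases hyz : G.Adj y z
  case neg =>
    have hA : adjMat G y z = 0 := by simp [adjMat, hyz]
    simp only [lowerM, flatM, raiseM, Matrix.add_apply, Matrix.sum_apply, sandwich_apply, hA,
      mul_zero, zero_mul, Finset.sum_const_zero, add_zero]
  case pos =>
    have hA : adjMat G y z = 1 := by simp [adjMat, hyz]
    have h1 : G.dist x z ≤ G.dist x y + 1 := by
      have := hG.dist_triangle (u := x) (v := y) (w := z)
      rwa [show G.dist y z = 1 from SimpleGraph.dist_eq_one_iff_adj.mpr hyz] at this
    have h2 : G.dist x y ≤ G.dist x z + 1 := by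
      have := hG.dist_triangle (u := x) (v := z) (w := y)
      rwa [show G.dist z y = 1 from SimpleGraph.dist_eq_one_iff_adj.mpr hyz.symm] at this
    have hdy := hD y
    have hdz := hD z
    have key : ∀ (s : Finset ℕ) (g : ℕ → ℂ),
        (∑ i ∈ s, g i * (if (G.dist x z : ℤ) = (i : ℤ) then 1 else 0))
          = if G.dist x z ∈ s then g (G.dist x z) else 0 := by
      intro s g
      rw [← Finset.sum_ite_eq' s (G.dist x z) g]
      refine Finset.sum_congr rfl fun i _ => ?_
      by_cases h : i = G.dist x z
      · subst h; simp
      · have hne : ¬ ((G.dist x z : ℤ) = (i : ℤ)) := fun hh => h (by exact_mod_cast hh.symm)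
        rw [if_neg hne, if_neg h, mul_zero]
    simp only [lowerM, flatM, raiseM, Matrix.add_apply, Matrix.sum_apply, sandwich_apply, hA,
      mul_one]
    rw [key, key, key]
    simp only [Finset.mem_Icc, Finset.mem_range]
    split_ifs <;> (try norm_num) <;> omega

lemma Estar_mem_Talg {i : ℤ} (h : 0 ≤ i ∧ i ≤ (D : ℤ)) : Estar G x i ∈ Talg G x D :=
  Algebra.subset_adjoin (Set.mem_insert_iff.mpr (Or.inr ⟨i, ⟨h.1, h.2⟩, rfl⟩))

lemma adjMat_mem_Talg : adjMat G ∈ Talg G x D :=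
  Algebra.subset_adjoin (Set.mem_insert _ _)

lemma lowerM_mem_Talg : lowerM G x D ∈ Talg G x D := by
  refine sum_mem fun i hi => ?_
  rw [Finset.mem_Icc] at hi
  exact mul_mem (mul_mem (Estar_mem_Talg G x D (by omega)) (adjMat_mem_Talg G x D))
    (Estar_mem_Talg G x D (by constructor <;> omega))

lemma flatM_mem_Talg : flatM G x D ∈ Talg G x D := by
  refine sum_mem fun i hi => ?_
  rw [Finset.mem_range] at hi
  exact mul_mem (mul_mem (Estar_mem_Talg G x D (by constructor <;> omega))
    (adjMat_mem_Talg G x D)) (Estar_mem_Talg G x D (by constructor <;> omega))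

lemma raiseM_mem_Talg : raiseM G x D ∈ Talg G x D := by
  refine sum_mem fun i hi => ?_
  rw [Finset.mem_range] at hi
  exact mul_mem (mul_mem (Estar_mem_Talg G x D (by omega)) (adjMat_mem_Talg G x D))
    (Estar_mem_Talg G x D (by constructor <;> omega))

lemma Qalg_le_Talg : Qalg G x D ≤ Talg G x D := by
  apply Algebra.adjoin_le
  rintro S hS
  simp only [Set.mem_insert_iff, Set.mem_singleton_iff] at hS
  rcases hS with rfl | rfl | rfl
  · exact lowerM_mem_Talg G x D
  · exact flatM_mem_Talg G x D
  · exact raiseM_mem_Talg G x D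

lemma lowerM_mem_Qalg : lowerM G x D ∈ Qalg G x D :=
  Algebra.subset_adjoin (by simp)
lemma flatM_mem_Qalg : flatM G x D ∈ Qalg G x D :=
  Algebra.subset_adjoin (by simp)
lemma raiseM_mem_Qalg : raiseM G x D ∈ Qalg G x D :=
  Algebra.subset_adjoin (by simp)

lemma adjMat_mem_Qalg (hG : G.Connected) (hD : ∀ y, G.dist x y ≤ D) :
    adjMat G ∈ Qalg G x D := by
  rw [adj_decomp G x D hG hD]
  exact add_mem (add_mem (lowerM_mem_Qalg G x D) (flatM_mem_Qalg G x D)) (raiseM_mem_Qalg G x D)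

end Aux
section Aux2

open Matrix BigOperators

variable {X : Type*} [Fintype X] [DecidableEq X]
variable (G : SimpleGraph X) (x : X) (D : ℕ) [DecidableRel G.Adj]

lemma lowerM_mul_Estar (j : ℤ) :
    lowerM G x D * Estar G x j = Estar G x (j - 1) * lowerM G x D := by
  have h := Estar_mul_lowerM G x D (j - 1)
  rw [show j - 1 + 1 = j by ring] at h
  exact h.symm

lemma flatM_mul_Estar (j : ℤ) :
    flatM G x D * Estar G x j = Estar G x j * flatM G x D :=
  (Estar_mul_flatM G x D j).symm

lemma raiseM_mul_Estar (j : ℤ) :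
    raiseM G x D * Estar G x j = Estar G x (j + 1) * raiseM G x D := by
  have h := Estar_mul_raiseM G x D (j + 1)
  rw [show j + 1 - 1 = j by ring] at h
  exact h.symm

lemma Mstar_le_Talg : Mstar G x D ≤ Subalgebra.toSubmodule (Talg G x D) := by
  rw [Mstar, Submodule.span_le]
  rintro _ ⟨i, hi, rfl⟩
  exact Estar_mem_Talg G x D ⟨hi.1, hi.2⟩

-- Notation: N = Q' * M where Q' = toSubmodule Qalg, M = Mstar.

lemma QM_absorb_left {q n : Matrix X X ℂ} (hq : q ∈ Qalg G x D)
    (hn : n ∈ Subalgebra.toSubmodule (Qalg G x D) * Mstar G x D) :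
    q * n ∈ Subalgebra.toSubmodule (Qalg G x D) * Mstar G x D := by
  refine Submodule.mul_induction_on
    (C := fun n => q * n ∈ Subalgebra.toSubmodule (Qalg G x D) * Mstar G x D) hn
    (fun a ha b hb => ?_) (fun m1 m2 h1 h2 => ?_)
  · beta_reduce
    rw [← mul_assoc]
    exact Submodule.mul_mem_mul
      ((Subalgebra.mem_toSubmodule _).mpr (mul_mem hq ((Subalgebra.mem_toSubmodule _).mp ha))) hb
  · beta_reduce
    rw [mul_add]; exact add_mem h1 h2

lemma QM_absorb_right (hD : ∀ y, G.dist x y ≤ D) {n m : Matrix X X ℂ}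
    (hn : n ∈ Subalgebra.toSubmodule (Qalg G x D) * Mstar G x D) (hm : m ∈ Mstar G x D) :
    n * m ∈ Subalgebra.toSubmodule (Qalg G x D) * Mstar G x D := by
  refine Submodule.mul_induction_on
    (C := fun n => n * m ∈ Subalgebra.toSubmodule (Qalg G x D) * Mstar G x D) hn
    (fun a ha b hb => ?_) (fun m1 m2 h1 h2 => ?_)
  · beta_reduce
    rw [mul_assoc]
    exact Submodule.mul_mem_mul ha (Mstar_mul_mem G x D hD hb hm)
  · beta_reduce
    rw [add_mul]; exact add_mem h1 h2

lemma Estar_mul_Qalg (hD : ∀ y, G.dist x y ≤ D) {S : Matrix X X ℂ}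
    (hS : S ∈ Qalg G x D) (j : ℤ) :
    Estar G x j * S ∈ Subalgebra.toSubmodule (Qalg G x D) * Mstar G x D := by
  induction hS using Algebra.adjoin_induction generalizing j with
  | mem g hg =>
    simp only [Set.mem_insert_iff, Set.mem_singleton_iff] at hg
    rcases hg with rfl | rfl | rfl
    · beta_reduce
      rw [Estar_mul_lowerM]
      exact Submodule.mul_mem_mul (lowerM_mem_Qalg G x D) (Estar_mem_Mstar G x D hD _)
    · beta_reduce
      rw [Estar_mul_flatM]
      exact Submodule.mul_mem_mul (flatM_mem_Qalg G x D) (Estar_mem_Mstar G x D hD _)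
    · beta_reduce
      rw [Estar_mul_raiseM]
      exact Submodule.mul_mem_mul (raiseM_mem_Qalg G x D) (Estar_mem_Mstar G x D hD _)
  | algebraMap r =>
    rw [← Algebra.commutes]
    exact Submodule.mul_mem_mul
      ((Subalgebra.mem_toSubmodule _).mpr ((Qalg G x D).algebraMap_mem r))
      (Estar_mem_Mstar G x D hD _)
  | add a b ha hb iha ihb =>
    rw [mul_add]
    exact add_mem (iha j) (ihb j)
  | mul a b ha hb iha ihb =>
    rw [← mul_assoc]
    refine Submodule.mul_induction_on
      (C := fun r => r * b ∈ Subalgebra.toSubmodule (Qalg G x D) * Mstar G x D) (iha j)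
      (fun q hq m hm => ?_) (fun m1 m2 h1 h2 => ?_)
    · beta_reduce
      rw [mul_assoc]
      refine QM_absorb_left G x D ((Subalgebra.mem_toSubmodule _).mp hq) ?_
      induction hm using Submodule.span_induction with
      | mem e he =>
        obtain ⟨i, _, rfl⟩ := he
        exact ihb i
      | zero => rw [zero_mul]; exact zero_mem _
      | add u v _ _ hu hv => rw [add_mul]; exact add_mem hu hv
      | smul c u _ hu => rw [smul_mul_assoc]; exact Submodule.smul_mem _ _ hu
    · beta_reduce
      rw [add_mul]; exact add_mem h1 h2

lemma Talg_le_QM (hG : G.Connected) (hD : ∀ y, G.dist x y ≤ D) :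
    Subalgebra.toSubmodule (Talg G x D)
      ≤ Subalgebra.toSubmodule (Qalg G x D) * Mstar G x D := by
  intro S hS
  rw [Subalgebra.mem_toSubmodule] at hS
  induction hS using Algebra.adjoin_induction with
  | mem g hg =>
    rcases Set.mem_insert_iff.mp hg with rfl | ⟨i, hi, rfl⟩
    · have := Submodule.mul_mem_mul
        ((Subalgebra.mem_toSubmodule _).mpr (adjMat_mem_Qalg G x D hG hD))
        (one_mem_Mstar G x D hD)
      rwa [mul_one] at this
    · have := Submodule.mul_mem_mul
        ((Subalgebra.mem_toSubmodule _).mpr (Qalg G x D).one_mem)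
        (Submodule.subset_span ⟨i, hi, rfl⟩ : Estar G x i ∈ Mstar G x D)
      rwa [one_mul] at this
  | algebraMap r =>
    have := Submodule.mul_mem_mul
      ((Subalgebra.mem_toSubmodule _).mpr ((Qalg G x D).algebraMap_mem r))
      (one_mem_Mstar G x D hD)
    rwa [mul_one] at this
  | add a b ha hb iha ihb => exact add_mem iha ihb
  | mul a b ha hb iha ihb =>
    refine Submodule.mul_induction_on
      (C := fun r => r * b ∈ Subalgebra.toSubmodule (Qalg G x D) * Mstar G x D) iha
      (fun q hq m hm => ?_) (fun m1 m2 h1 h2 => ?_)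
    · beta_reduce
      rw [mul_assoc]
      refine QM_absorb_left G x D ((Subalgebra.mem_toSubmodule _).mp hq) ?_
      induction hm using Submodule.span_induction with
      | mem e he =>
        obtain ⟨i, _, rfl⟩ := he
        refine Submodule.mul_induction_on
          (C := fun r => Estar G x i * r ∈ Subalgebra.toSubmodule (Qalg G x D) * Mstar G x D)
          ihb (fun q' hq' m' hm' => ?_) (fun m1 m2 h1 h2 => ?_)
        · beta_reduce
          rw [← mul_assoc]
          exact QM_absorb_right G x D hD
            (Estar_mul_Qalg G x D hD ((Subalgebra.mem_toSubmodule _).mp hq') i) hm'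
        · beta_reduce
          rw [mul_add]; exact add_mem h1 h2
      | zero => rw [zero_mul]; exact zero_mem _
      | add u v _ _ hu hv => rw [add_mul]; exact add_mem hu hv
      | smul c u _ hu => rw [smul_mul_assoc]; exact Submodule.smul_mem _ _ hu
    · beta_reduce
      rw [add_mul]; exact add_mem h1 h2

-- Mirror versions for N₂ = M * Q'.

lemma MQ_absorb_right {n q : Matrix X X ℂ}
    (hn : n ∈ Mstar G x D * Subalgebra.toSubmodule (Qalg G x D)) (hq : q ∈ Qalg G x D) :
    n * q ∈ Mstar G x D * Subalgebra.toSubmodule (Qalg G x D) := by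
  refine Submodule.mul_induction_on
    (C := fun n => n * q ∈ Mstar G x D * Subalgebra.toSubmodule (Qalg G x D)) hn
    (fun a ha b hb => ?_) (fun m1 m2 h1 h2 => ?_)
  · beta_reduce
    rw [mul_assoc]
    exact Submodule.mul_mem_mul ha
      ((Subalgebra.mem_toSubmodule _).mpr (mul_mem ((Subalgebra.mem_toSubmodule _).mp hb) hq))
  · beta_reduce
    rw [add_mul]; exact add_mem h1 h2

lemma MQ_absorb_left (hD : ∀ y, G.dist x y ≤ D) {m n : Matrix X X ℂ}
    (hm : m ∈ Mstar G x D)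
    (hn : n ∈ Mstar G x D * Subalgebra.toSubmodule (Qalg G x D)) :
    m * n ∈ Mstar G x D * Subalgebra.toSubmodule (Qalg G x D) := by
  refine Submodule.mul_induction_on
    (C := fun n => m * n ∈ Mstar G x D * Subalgebra.toSubmodule (Qalg G x D)) hn
    (fun a ha b hb => ?_) (fun m1 m2 h1 h2 => ?_)
  · beta_reduce
    rw [← mul_assoc]
    exact Submodule.mul_mem_mul (Mstar_mul_mem G x D hD hm ha) hb
  · beta_reduce
    rw [mul_add]; exact add_mem h1 h2

lemma Qalg_mul_Estar (hD : ∀ y, G.dist x y ≤ D) {S : Matrix X X ℂ}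
    (hS : S ∈ Qalg G x D) (j : ℤ) :
    S * Estar G x j ∈ Mstar G x D * Subalgebra.toSubmodule (Qalg G x D) := by
  induction hS using Algebra.adjoin_induction generalizing j with
  | mem g hg =>
    simp only [Set.mem_insert_iff, Set.mem_singleton_iff] at hg
    rcases hg with rfl | rfl | rfl
    · beta_reduce
      rw [lowerM_mul_Estar]
      exact Submodule.mul_mem_mul (Estar_mem_Mstar G x D hD _)
        ((Subalgebra.mem_toSubmodule _).mpr (lowerM_mem_Qalg G x D))
    · beta_reduce
      rw [flatM_mul_Estar]
      exact Submodule.mul_mem_mul (Estar_mem_Mstar G x D hD _)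
        ((Subalgebra.mem_toSubmodule _).mpr (flatM_mem_Qalg G x D))
    · beta_reduce
      rw [raiseM_mul_Estar]
      exact Submodule.mul_mem_mul (Estar_mem_Mstar G x D hD _)
        ((Subalgebra.mem_toSubmodule _).mpr (raiseM_mem_Qalg G x D))
  | algebraMap r =>
    rw [Algebra.commutes]
    exact Submodule.mul_mem_mul (Estar_mem_Mstar G x D hD _)
      ((Subalgebra.mem_toSubmodule _).mpr ((Qalg G x D).algebraMap_mem r))
  | add a b ha hb iha ihb =>
    rw [add_mul]
    exact add_mem (iha j) (ihb j)
  | mul a b ha hb iha ihb =>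
    rw [mul_assoc]
    refine Submodule.mul_induction_on
      (C := fun r => a * r ∈ Mstar G x D * Subalgebra.toSubmodule (Qalg G x D)) (ihb j)
      (fun m hm q hq => ?_) (fun m1 m2 h1 h2 => ?_)
    · beta_reduce
      rw [← mul_assoc]
      refine MQ_absorb_right G x D ?_ ((Subalgebra.mem_toSubmodule _).mp hq)
      induction hm using Submodule.span_induction with
      | mem e he =>
        obtain ⟨i, _, rfl⟩ := he
        exact iha i
      | zero => rw [mul_zero]; exact zero_mem _
      | add u v _ _ hu hv => rw [mul_add]; exact add_mem hu hv
      | smul c u _ hu => rw [mul_smul_comm]; exact Submodule.smul_mem _ _ hu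
    · beta_reduce
      rw [mul_add]; exact add_mem h1 h2

lemma Talg_le_MQ (hG : G.Connected) (hD : ∀ y, G.dist x y ≤ D) :
    Subalgebra.toSubmodule (Talg G x D)
      ≤ Mstar G x D * Subalgebra.toSubmodule (Qalg G x D) := by
  intro S hS
  rw [Subalgebra.mem_toSubmodule] at hS
  induction hS using Algebra.adjoin_induction with
  | mem g hg =>
    rcases Set.mem_insert_iff.mp hg with rfl | ⟨i, hi, rfl⟩
    · have := Submodule.mul_mem_mul (one_mem_Mstar G x D hD)
        ((Subalgebra.mem_toSubmodule _).mpr (adjMat_mem_Qalg G x D hG hD))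
      rwa [one_mul] at this
    · have := Submodule.mul_mem_mul
        (Submodule.subset_span ⟨i, hi, rfl⟩ : Estar G x i ∈ Mstar G x D)
        ((Subalgebra.mem_toSubmodule _).mpr (Qalg G x D).one_mem)
      rwa [mul_one] at this
  | algebraMap r =>
    have := Submodule.mul_mem_mul (one_mem_Mstar G x D hD)
      ((Subalgebra.mem_toSubmodule _).mpr ((Qalg G x D).algebraMap_mem r))
    rwa [one_mul] at this
  | add a b ha hb iha ihb => exact add_mem iha ihb
  | mul a b ha hb iha ihb =>
    refine Submodule.mul_induction_on
      (C := fun r => a * r ∈ Mstar G x D * Subalgebra.toSubmodule (Qalg G x D)) ihb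
      (fun m hm q hq => ?_) (fun m1 m2 h1 h2 => ?_)
    · beta_reduce
      rw [← mul_assoc]
      refine MQ_absorb_right G x D ?_ ((Subalgebra.mem_toSubmodule _).mp hq)
      induction hm using Submodule.span_induction with
      | mem e he =>
        obtain ⟨i, _, rfl⟩ := he
        refine Submodule.mul_induction_on
          (C := fun r => r * Estar G x i ∈ Mstar G x D * Subalgebra.toSubmodule (Qalg G x D))
          iha (fun m' hm' q' hq' => ?_) (fun m1 m2 h1 h2 => ?_)
        · beta_reduce
          rw [mul_assoc]
          exact MQ_absorb_left G x D hD hm'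
            (Qalg_mul_Estar G x D hD ((Subalgebra.mem_toSubmodule _).mp hq') i)
        · beta_reduce
          rw [add_mul]; exact add_mem h1 h2
      | zero => rw [mul_zero]; exact zero_mem _
      | add u v _ _ hu hv => rw [mul_add]; exact add_mem hu hv
      | smul c u _ hu => rw [mul_smul_comm]; exact Submodule.smul_mem _ _ hu
    · beta_reduce
      rw [mul_add]; exact add_mem h1 h2

end Aux2
theorem stmt6 {X : Type*} [Fintype X] [DecidableEq X]
    (G : SimpleGraph X) [DecidableRel G.Adj] (hG : G.Connected) (x : X) (D : ℕ)
    (hD : ∀ y, G.dist x y ≤ D) (hD2 : ∃ y, G.dist x y = D) :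
    Subalgebra.toSubmodule (Qalg G x D) * Mstar G x D
      = Subalgebra.toSubmodule (Talg G x D) ∧
    Subalgebra.toSubmodule (Talg G x D)
      = Mstar G x D * Subalgebra.toSubmodule (Qalg G x D) := by
  constructor
  · refine le_antisymm ?_ (Talg_le_QM G x D hG hD)
    refine Submodule.mul_le.mpr fun a ha b hb => ?_
    exact (Subalgebra.mem_toSubmodule _).mpr
      (mul_mem (Qalg_le_Talg G x D ((Subalgebra.mem_toSubmodule _).mp ha))
        ((Subalgebra.mem_toSubmodule _).mp (Mstar_le_Talg G x D hb)))
  · refine le_antisymm (Talg_le_MQ G x D hG hD) ?_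
    refine Submodule.mul_le.mpr fun a ha b hb => ?_
    exact (Subalgebra.mem_toSubmodule _).mpr
      (mul_mem ((Subalgebra.mem_toSubmodule _).mp (Mstar_le_Talg G x D ha))
        (Qalg_le_Talg G x D ((Subalgebra.mem_toSubmodule _).mp hb)))
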